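/- Let p ≥ 3 be prime and suppose B satisfies Jenkins' identity. If p² ∣ D, then for all n ≥ 1, B(D, p^{2n}d) ≡ B(D/p², p^{2n−2}d) − (−d/p)·p^{n−1}·B(p^{2(n−1)}D, d) (mod pⁿ). -/

import Mathlib

open Finset

/-- Jenkins' identity for the traces of singular moduli `B(D,d)`, with the convention
`0⁰ = 1` and `B(a,b) = 0` for invalid arguments. -/
def JenkinsId (p : ℕ) [Fact p.Prime] (B : ℕ → ℕ → ℤ) : Prop :=
  ∀ D d n : ℕ, 1 ≤ n →
    B D (p ^ (2 * n) * d) =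
      (p : ℤ) ^ n * B (p ^ (2 * n) * D) d
        + ∑ k ∈ range n, (legendreSym p (D : ℤ)) ^ (n - k - 1) *
            ((if p ^ 2 ∣ D then B (D / p ^ 2) (p ^ (2 * k) * d) else 0)
              - (p : ℤ) ^ (k + 1) *
                (if p ^ 2 ∣ d then B (p ^ (2 * k) * D) (d / p ^ 2) else 0))
        + ∑ k ∈ range n, (legendreSym p (D : ℤ)) ^ (n - k - 1) *
            ((legendreSym p (D : ℤ) - legendreSym p (-(d : ℤ))) * (p : ℤ) ^ k *
              B (p ^ k * D) d)

private lemma sum_zero_pow_mul (n : ℕ) (hn : 1 ≤ n) (f : ℕ → ℤ) :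
    ∑ k ∈ range n, (0 : ℤ) ^ (n - k - 1) * f k = f (n - 1) := by
  obtain ⟨m, rfl⟩ : ∃ m, n = m + 1 := ⟨n - 1, by omega⟩
  rw [Finset.sum_range_succ]
  have h1 : ∑ k ∈ range m, (0 : ℤ) ^ (m + 1 - k - 1) * f k = 0 := by
    apply Finset.sum_eq_zero
    intro k hk
    rw [mem_range] at hk
    rw [zero_pow (by omega), zero_mul]
  simp [h1]

/-- If `p² ∣ D`, then for all `n ≥ 1`,
`B(D, p^{2n}d) ≡ B(D/p², p^{2n−2}d) − (−d/p)·p^{n−1}·B(p^{2(n−1)}D, d) (mod pⁿ)`. -/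
theorem jenkins_p_sq_divides_D (p : ℕ) [Fact p.Prime] (hp3 : 3 ≤ p)
    (B : ℕ → ℕ → ℤ) (hJ : JenkinsId p B) (D : ℕ) (hp2D : p ^ 2 ∣ D) :
    ∀ d n : ℕ, 1 ≤ n →
      B D (p ^ (2 * n) * d) ≡
        B (D / p ^ 2) (p ^ (2 * n - 2) * d)
          - legendreSym p (-(d : ℤ)) * (p : ℤ) ^ (n - 1) * B (p ^ (2 * (n - 1)) * D) d
        [ZMOD (p : ℤ) ^ n] := by
  intro d n hn
  have hppos : 0 < p := by omega
  have hpD : p ∣ D := dvd_trans (dvd_pow_self p two_ne_zero) hp2D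
  have hLD : legendreSym p (D : ℤ) = 0 := by
    rw [legendreSym.eq_zero_iff]
    exact_mod_cast (ZMod.natCast_eq_zero_iff D p).2 hpD
  rcases eq_or_lt_of_le hn with h1 | h2
  · -- n = 1
    subst h1
    have E := hJ D d 1 le_rfl
    simp only [Finset.sum_range_one, hLD, Nat.sub_self, pow_zero, one_mul, pow_one,
      mul_zero, zero_mul, if_pos hp2D, mul_one, Nat.mul_zero, zero_add] at E
    -- goal
    have h20 : (2 : ℕ) * 1 - 2 = 0 := by norm_num
    rw [h20]
    simp only [Nat.sub_self, Nat.mul_zero, Nat.mul_one, pow_zero, one_mul]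
    refine Int.modEq_iff_dvd.mpr ⟨-(B (p ^ 2 * D) d
        - (if p ^ 2 ∣ d then B D (d / p ^ 2) else 0)), ?_⟩
    simp only [pow_one]
    linear_combination -E
  · -- n ≥ 2
    obtain ⟨m, rfl⟩ : ∃ m, n = m + 1 := ⟨n - 1, by omega⟩
    have hm : 1 ≤ m := by omega
    have hLd2 : legendreSym p (-((p ^ 2 * d : ℕ) : ℤ)) = 0 := by
      rw [legendreSym.eq_zero_iff]
      push_cast
      simp [ZMod.natCast_self]
    have hL2 : legendreSym p ((p ^ (2 * m) * D : ℕ) : ℤ) = 0 := by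
      rw [legendreSym.eq_zero_iff]
      exact_mod_cast (ZMod.natCast_eq_zero_iff _ p).2
        (Dvd.dvd.mul_left hpD _)
    -- Equation E1 : Jenkins with (D, p^2*d, m)
    have E1 := hJ D (p ^ 2 * d) m hm
    rw [hLD, hLd2] at E1
    rw [sum_zero_pow_mul m hm, sum_zero_pow_mul m hm] at E1
    have ha : p ^ (2 * (m - 1)) * (p ^ 2 * d) = p ^ (2 * m) * d := by
      rw [← mul_assoc, ← pow_add, show 2 * (m - 1) + 2 = 2 * m from by omega]
    have hb : p ^ (2 * m) * (p ^ 2 * d) = p ^ (2 * (m + 1)) * d := by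
      rw [← mul_assoc, ← pow_add, show 2 * m + 2 = 2 * (m + 1) from by omega]
    have hdvd2 : p ^ 2 ∣ p ^ 2 * d := dvd_mul_right _ _
    have hdiv2 : p ^ 2 * d / p ^ 2 = d := Nat.mul_div_cancel_left d (by positivity)
    have hm1 : m - 1 + 1 = m := by omega
    rw [if_pos hp2D, if_pos hdvd2, ha, hb, hdiv2, hm1] at E1
    simp only [sub_zero, zero_sub, zero_mul, mul_zero, neg_zero, add_zero] at E1
    -- Equation E2 : Jenkins with (p^(2m) D, d, 1)
    have E2 := hJ (p ^ (2 * m) * D) d 1 le_rfl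
    simp only [Finset.sum_range_one, hL2, Nat.sub_self, pow_zero, one_mul, pow_one,
      mul_zero, zero_mul, Nat.mul_zero, zero_add] at E2
    have hdvd3 : p ^ 2 ∣ p ^ (2 * m) * D := Dvd.dvd.mul_left hp2D _
    have hc : p ^ (2 * m) * D / p ^ 2 = p ^ (2 * (m - 1)) * D := by
      have : p ^ (2 * m) * D = p ^ 2 * (p ^ (2 * (m - 1)) * D) := by
        rw [← mul_assoc, ← pow_add, show 2 + 2 * (m - 1) = 2 * m from by omega]
      rw [this, Nat.mul_div_cancel_left _ (by positivity)]
    have hd' : p ^ (2 * 1) * (p ^ (2 * m) * D) = p ^ (2 * (m + 1)) * D := by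
      rw [← mul_assoc, ← pow_add, show 2 * 1 + 2 * m = 2 * (m + 1) from by omega]
    rw [if_pos hdvd3, hc, hd'] at E2
    simp only [Nat.mul_one, pow_one] at E2
    -- Combine
    have hsub1 : 2 * (m + 1) - 2 = 2 * m := by omega
    have hsub2 : m + 1 - 1 = m := by omega
    rw [hsub1, hsub2]
    refine Int.modEq_iff_dvd.mpr ⟨-(B (p ^ (2 * (m + 1)) * D) d
        - (if p ^ 2 ∣ d then B (p ^ (2 * m) * D) (d / p ^ 2) else 0)), ?_⟩
    have : (p : ℤ) ^ (m + 1) = (p : ℤ) ^ m * p := by ring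
    rw [this]
    linear_combination -E1 - (p : ℤ) ^ m * E2
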